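/- If L is a locked subset of a 2-connected matroid M on ground set E, then L is a closed (flat) set in M and E\L is a closed set in the dual matroid M*. -/

import Mathlib

open Set Matroid

variable {α : Type*}

/-- The (ℕ-valued) rank of a set in a matroid: the largest cardinality of an
independent subset. -/
noncomputable def Matroid.rnk (M : Matroid α) (X : Set α) : ℕ :=
  sSup (Set.ncard '' {I | M.Indep I ∧ I ⊆ X})

/-- `C` is a circuit of `M`: a minimal dependent set. -/
def Matroid.IsCircuitSet (M : Matroid α) (C : Set α) : Prop :=
  C ⊆ M.E ∧ ¬ M.Indep C ∧ ∀ x ∈ C, M.Indep (C \ {x})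

/-- A matroid is 2-connected (connected in Oxley's sense) if it is nonempty and
every two distinct elements of the ground set lie on a common circuit. -/
def Matroid.TwoConnected (M : Matroid α) : Prop :=
  M.E.Nonempty ∧ ∀ e ∈ M.E, ∀ f ∈ M.E, e ≠ f →
    ∃ C, M.IsCircuitSet C ∧ e ∈ C ∧ f ∈ C

/-- `L` is locked in `M` if `M|L` and `M✶|(E\L)` are 2-connected and both
`r(L)` and `r✶(E\L)` are at least `2`. -/
def Matroid.Locked (M : Matroid α) (L : Set α) : Prop :=
  L ⊂ M.E ∧ (M ↾ L).TwoConnected ∧ (M✶ ↾ (M.E \ L)).TwoConnected ∧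
    2 ≤ M.rnk L ∧ 2 ≤ M✶.rnk (M.E \ L)

/-- From `2 ≤ rnk X` we can extract an independent subset of `X` with at
least two elements. -/
lemma Matroid.rnk_two_exists {M : Matroid α} {X : Set α} (h : 2 ≤ M.rnk X) :
    ∃ I, M.Indep I ∧ I ⊆ X ∧ 2 ≤ I.ncard := by
  by_contra hcon
  push_neg at hcon
  have hub : ∀ n ∈ Set.ncard '' {I | M.Indep I ∧ I ⊆ X}, n ≤ 1 := by
    rintro n ⟨I, ⟨hI, hIX⟩, rfl⟩
    have := hcon I hI hIX
    omega
  rcases (Set.ncard '' {I | M.Indep I ∧ I ⊆ X}).eq_empty_or_nonempty with hemp | hne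
  · rw [Matroid.rnk, hemp, csSup_empty] at h
    simp at h
  · have : M.rnk X ≤ 1 := csSup_le hne hub
    omega

/-- A circuit of a restriction (to a subset of the ground set) is a circuit of
the original matroid. -/
lemma Matroid.IsCircuitSet.of_restrict {M : Matroid α} {R C : Set α} (hR : R ⊆ M.E)
    (hC : (M ↾ R).IsCircuitSet C) : M.IsCircuitSet C ∧ C ⊆ R := by
  obtain ⟨hCE, hdep, hmin⟩ := hC
  have hCR : C ⊆ R := hCE
  refine ⟨⟨hCR.trans hR, ?_, ?_⟩, hCR⟩
  · intro hI
    exact hdep (restrict_indep_iff.2 ⟨hI, hCR⟩)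
  · intro x hx
    exact ((restrict_indep_iff).1 (hmin x hx)).1

/-- The key lemma: if `D` is a cocircuit of `M` (a circuit of `M✶`), `e ∈ D`,
and `X` is a set disjoint from `D`, then `e ∉ M.closure X`. -/
lemma Matroid.key {M : Matroid α} {D X : Set α} {e : α}
    (hD : M✶.IsCircuitSet D) (heD : e ∈ D) (hX : X ⊆ M.E)
    (hdisj : Disjoint X D) (he : e ∈ M.closure X) : False := by
  obtain ⟨hDE, hdep, hmin⟩ := hD
  have hDE' : D ⊆ M.E := hDE
  have heE : e ∈ M.E := hDE' heD
  have hXY : X ⊆ M.E \ D := subset_diff.2 ⟨hX, hdisj⟩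
  have he' : e ∈ M.closure (M.E \ D) := M.closure_subset_closure hXY he
  have h1 : M✶.Indep (D \ {e}) := hmin e heD
  have h2 : M.Spanning (M.E \ (D \ {e})) :=
    (M.coindep_iff_compl_spanning (diff_subset.trans hDE')).1 h1
  have hset : M.E \ (D \ {e}) = insert e (M.E \ D) := by
    ext x
    by_cases hx : x = e
    · subst hx; simp [heE, heD]
    · simp [hx]
  rw [hset] at h2
  have hcl : M.closure (insert e (M.E \ D)) = M.closure (M.E \ D) :=
    closure_insert_eq_of_mem_closure he'
  have hsp : M.Spanning (M.E \ D) := by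
    rw [M.spanning_iff_closure_eq diff_subset, ← hcl, h2.closure_eq]
  exact hdep ((M.coindep_iff_compl_spanning hDE').2 hsp)

/-- If `L` is locked in a 2-connected matroid `M`, then `L` is a flat of `M`
and `E \ L` is a flat of the dual `M✶`. -/
theorem locked_flat (M : Matroid α) (hM : M.TwoConnected) (L : Set α)
    (hL : M.Locked L) : M.IsFlat L ∧ M✶.IsFlat (M.E \ L) := by
  obtain ⟨hLE, hML, hMdL, hr, hr'⟩ := hL
  have hLE' : L ⊆ M.E := hLE.subset
  -- L is closed in M
  have hclL : M.closure L ⊆ L := by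
    intro e he
    by_contra heL
    have heE : e ∈ M.E := M.closure_subset_ground L he
    have heEL : e ∈ M.E \ L := ⟨heE, heL⟩
    obtain ⟨I, hI, hIX, hI2⟩ := Matroid.rnk_two_exists hr'
    obtain ⟨f, hfI, hfe⟩ := Set.exists_ne_of_one_lt_ncard (s := I) (by omega) e
    obtain ⟨D, hD, heD, -⟩ := hMdL.2 e heEL f (hIX hfI) (Ne.symm hfe)
    obtain ⟨hD', hDsub⟩ := hD.of_restrict diff_subset
    exact Matroid.key hD' heD hLE' (disjoint_sdiff_right.mono_right hDsub) he
  have hflatL : M.IsFlat L := by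
    refine ⟨fun I X hIL hIX => ?_, hLE'⟩
    have h1 : X ⊆ M.closure I := hIX.subset_closure
    rw [hIL.closure_eq_closure] at h1
    exact h1.trans hclL
  refine ⟨hflatL, ?_⟩
  -- E \ L is closed in M✶
  have hclL' : M✶.closure (M.E \ L) ⊆ M.E \ L := by
    intro e he
    by_contra heL
    have heE : e ∈ M.E := M✶.closure_subset_ground (M.E \ L) he
    have heL' : e ∈ L := by
      by_contra h
      exact heL ⟨heE, h⟩
    obtain ⟨I, hI, hIX, hI2⟩ := Matroid.rnk_two_exists hr
    obtain ⟨f, hfI, hfe⟩ := Set.exists_ne_of_one_lt_ncard (s := I) (by omega) e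
    obtain ⟨C, hC, heC, -⟩ := hML.2 e heL' f (hIX hfI) (Ne.symm hfe)
    obtain ⟨hC', hCsub⟩ := hC.of_restrict hLE'
    have hC'' : (M✶)✶.IsCircuitSet C := by rw [dual_dual]; exact hC'
    have hXE : M.E \ L ⊆ M✶.E := diff_subset
    have hdisj : Disjoint (M.E \ L) C :=
      (disjoint_sdiff_left.mono_right hCsub)
    exact Matroid.key hC'' heC hXE hdisj he
  refine ⟨fun I X hIL hIX => ?_, diff_subset⟩
  have h1 : X ⊆ M✶.closure I := hIX.subset_closure
  rw [hIL.closure_eq_closure] at h1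
  exact h1.trans hclL'
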